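/- Let (p_n)_{n≥0} be monic real polynomials, deg p_n = n, all of whose zeros lie in a fixed compact interval Δ ⊂ ℝ, with the zeros of p_n and p_{n+1} simple and interlacing for every n. Then for every compact set K ⊂ ℂ \ Δ, sup_{n ≥ 0} sup_{z ∈ K} |p_{n+1}(z)|/|p_n(z)| < ∞. -/

import Mathlib

open Polynomial

lemma ratio_aux_pt (z : ℂ) (s t : ℝ) (h : |z.re - s| ≤ |z.re - t|) :
    ‖z - (s : ℂ)‖ ≤ ‖z - (t : ℂ)‖ := by
  have h1 : ∀ c : ℝ, ‖z - (c : ℂ)‖ ^ 2 = (z.re - c) ^ 2 + z.im ^ 2 := by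
    intro c
    rw [Complex.sq_norm, Complex.normSq_apply]
    simp [Complex.sub_re, Complex.sub_im]
    ring
  have h2 : ‖z - (s : ℂ)‖ ^ 2 ≤ ‖z - (t : ℂ)‖ ^ 2 := by
    rw [h1, h1]
    nlinarith [sq_abs (z.re - s), sq_abs (z.re - t), abs_nonneg (z.re - s), abs_nonneg (z.re - t)]
  nlinarith [norm_nonneg (z - (s : ℂ)), norm_nonneg (z - (t : ℂ))]

lemma ratio_aux_cross (X : ℕ → ℝ) (u : ℝ) :
    ∀ n : ℕ, X 0 ≤ u → u < X n → ∃ m, m < n ∧ X m ≤ u ∧ u < X (m + 1) := by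
  intro n
  induction n with
  | zero => intro h0 h1; exact absurd h1 (not_lt.mpr h0)
  | succ n ih =>
    intro h0 h1
    by_cases h : u < X n
    · obtain ⟨m, hm, h2, h3⟩ := ih h0 h
      exact ⟨m, Nat.lt_succ_of_lt hm, h2, h3⟩
    · exact ⟨n, Nat.lt_succ_self n, le_of_not_gt h, h1⟩

lemma ratio_aux_key (z : ℂ) (d R : ℝ) (hd : 0 < d) (hR : 0 ≤ R) (n : ℕ) (hn : 1 ≤ n)
    (X Y : ℕ → ℝ)
    (hXm : ∀ i j : ℕ, i ≤ j → j ≤ n → X i ≤ X j)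
    (hXY : ∀ i, i < n → X i < Y i)
    (hYX : ∀ i, i < n → Y i < X (i + 1))
    (hdY : ∀ i, i < n → d ≤ ‖z - (Y i : ℂ)‖)
    (hRX : ∀ i, i ≤ n → ‖z - (X i : ℂ)‖ ≤ R) :
    ∏ i ∈ Finset.range (n + 1), ‖z - (X i : ℂ)‖ ≤
      (R + R ^ 2 / d) * ∏ i ∈ Finset.range n, ‖z - (Y i : ℂ)‖ := by
  have hYnn : (0 : ℝ) ≤ ∏ i ∈ Finset.range n, ‖z - (Y i : ℂ)‖ :=
    Finset.prod_nonneg fun i _ => norm_nonneg _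
  have hRd : 0 ≤ R ^ 2 / d := div_nonneg (sq_nonneg R) hd.le
  by_cases h0 : z.re < X 0
  · -- all zeros to the right of Re z
    have hstep : ∏ i ∈ Finset.range n, ‖z - (X i : ℂ)‖ ≤
        ∏ i ∈ Finset.range n, ‖z - (Y i : ℂ)‖ := by
      apply Finset.prod_le_prod (fun i _ => norm_nonneg _)
      intro i hi
      rw [Finset.mem_range] at hi
      apply ratio_aux_pt
      have h1 : z.re < X i := lt_of_lt_of_le h0 (hXm 0 i (Nat.zero_le i) hi.le)
      have h2 : X i < Y i := hXY i hi
      rw [abs_of_neg (by linarith), abs_of_neg (by linarith)]; linarith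
    rw [Finset.prod_range_succ]
    calc (∏ i ∈ Finset.range n, ‖z - (X i : ℂ)‖) * ‖z - (X n : ℂ)‖
        ≤ (∏ i ∈ Finset.range n, ‖z - (Y i : ℂ)‖) * R :=
          mul_le_mul hstep (hRX n le_rfl) (norm_nonneg _) hYnn
      _ ≤ (R + R ^ 2 / d) * ∏ i ∈ Finset.range n, ‖z - (Y i : ℂ)‖ := by
          rw [mul_comm]
          exact mul_le_mul_of_nonneg_right (by linarith) hYnn
  by_cases h1 : X n ≤ z.re
  · -- all zeros to the left of Re z
    have hstep : ∏ i ∈ Finset.range n, ‖z - (X (i + 1) : ℂ)‖ ≤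
        ∏ i ∈ Finset.range n, ‖z - (Y i : ℂ)‖ := by
      apply Finset.prod_le_prod (fun i _ => norm_nonneg _)
      intro i hi
      rw [Finset.mem_range] at hi
      apply ratio_aux_pt
      have h2 : Y i < X (i + 1) := hYX i hi
      have h3 : X (i + 1) ≤ X n := hXm (i + 1) n (by omega) le_rfl
      rw [abs_of_nonneg (by linarith), abs_of_nonneg (by linarith)]; linarith
    rw [Finset.prod_range_succ']
    calc (∏ i ∈ Finset.range n, ‖z - (X (i + 1) : ℂ)‖) * ‖z - (X 0 : ℂ)‖
        ≤ (∏ i ∈ Finset.range n, ‖z - (Y i : ℂ)‖) * R :=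
          mul_le_mul hstep (hRX 0 (by omega)) (norm_nonneg _) hYnn
      _ ≤ (R + R ^ 2 / d) * ∏ i ∈ Finset.range n, ‖z - (Y i : ℂ)‖ := by
          rw [mul_comm]
          exact mul_le_mul_of_nonneg_right (by linarith) hYnn
  · -- Re z is between X m and X (m+1)
    obtain ⟨m, hmn, hm1, hm2⟩ := ratio_aux_cross X z.re n (le_of_not_gt h0) (lt_of_not_ge h1)
    have e1 : ∏ i ∈ Finset.range (n + 1), ‖z - (X i : ℂ)‖
        = ‖z - (X 0 : ℂ)‖ * ((∏ i ∈ Finset.Ico 1 (m + 1), ‖z - (X i : ℂ)‖) *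
            ∏ i ∈ Finset.Ico (m + 1) n, ‖z - (X i : ℂ)‖) * ‖z - (X n : ℂ)‖ := by
      rw [Finset.prod_range_succ, Finset.range_eq_Ico,
        ← Finset.prod_Ico_consecutive _ (show (0:ℕ) ≤ m + 1 by omega) (show m + 1 ≤ n by omega),
        ← Finset.prod_Ico_consecutive _ (show (0:ℕ) ≤ 1 by omega) (show 1 ≤ m + 1 by omega),
        Nat.Ico_zero_eq_range, Finset.prod_range_one]
      ring
    have e2 : ∏ i ∈ Finset.range n, ‖z - (Y i : ℂ)‖
        = ((∏ i ∈ Finset.range m, ‖z - (Y i : ℂ)‖) * ‖z - (Y m : ℂ)‖) *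
            ∏ i ∈ Finset.Ico (m + 1) n, ‖z - (Y i : ℂ)‖ := by
      rw [Finset.range_eq_Ico,
        ← Finset.prod_Ico_consecutive _ (show (0:ℕ) ≤ m + 1 by omega) (show m + 1 ≤ n by omega),
        ← Finset.prod_Ico_consecutive _ (show (0:ℕ) ≤ m by omega) (show m ≤ m + 1 by omega),
        ← Finset.range_eq_Ico]
      congr 1
      congr 1
      rw [Finset.prod_Ico_eq_prod_range]
      simp
    have c1 : ∏ i ∈ Finset.Ico 1 (m + 1), ‖z - (X i : ℂ)‖ ≤
        ∏ i ∈ Finset.range m, ‖z - (Y i : ℂ)‖ := by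
      rw [Finset.prod_Ico_eq_prod_range]
      simp only [Nat.add_sub_cancel]
      apply Finset.prod_le_prod (fun i _ => norm_nonneg _)
      intro i hi
      rw [Finset.mem_range] at hi
      have hix : (1 + i) = i + 1 := by omega
      rw [hix]
      apply ratio_aux_pt
      have h2 : Y i < X (i + 1) := hYX i (by omega)
      have h3 : X (i + 1) ≤ X m := hXm (i + 1) m (by omega) (by omega)
      rw [abs_of_nonneg (by linarith), abs_of_nonneg (by linarith)]; linarith
    have c2 : ∏ i ∈ Finset.Ico (m + 1) n, ‖z - (X i : ℂ)‖ ≤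
        ∏ i ∈ Finset.Ico (m + 1) n, ‖z - (Y i : ℂ)‖ := by
      apply Finset.prod_le_prod (fun i _ => norm_nonneg _)
      intro i hi
      rw [Finset.mem_Ico] at hi
      apply ratio_aux_pt
      have h2 : X (m + 1) ≤ X i := hXm (m + 1) i hi.1 (by omega)
      have h3 : X i < Y i := hXY i hi.2
      rw [abs_of_neg (by linarith), abs_of_neg (by linarith)]; linarith
    rw [e1, e2]
    set A := ∏ i ∈ Finset.Ico 1 (m + 1), ‖z - (X i : ℂ)‖ with hA
    set B := ∏ i ∈ Finset.Ico (m + 1) n, ‖z - (X i : ℂ)‖ with hB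
    set A' := ∏ i ∈ Finset.range m, ‖z - (Y i : ℂ)‖ with hA'
    set B' := ∏ i ∈ Finset.Ico (m + 1) n, ‖z - (Y i : ℂ)‖ with hB'
    have hA'nn : 0 ≤ A' := Finset.prod_nonneg fun i _ => norm_nonneg _
    have hB'nn : 0 ≤ B' := Finset.prod_nonneg fun i _ => norm_nonneg _
    have hABnn : 0 ≤ A * B :=
      mul_nonneg (Finset.prod_nonneg fun i _ => norm_nonneg _)
        (Finset.prod_nonneg fun i _ => norm_nonneg _)
    have hYm : d ≤ ‖z - (Y m : ℂ)‖ := hdY m hmn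
    have step1 : ‖z - (X 0 : ℂ)‖ * (A * B) * ‖z - (X n : ℂ)‖ ≤ R * (A' * B') * R := by
      apply mul_le_mul _ (hRX n le_rfl) (norm_nonneg _)
        (mul_nonneg hR (mul_nonneg hA'nn hB'nn))
      exact mul_le_mul (hRX 0 (by omega)) (mul_le_mul c1 c2
        (Finset.prod_nonneg fun i _ => norm_nonneg _) hA'nn) hABnn hR
    have step2 : R * (A' * B') * R ≤ (R + R ^ 2 / d) * (A' * ‖z - (Y m : ℂ)‖ * B') := by
      have h4 : R * (A' * B') * R = (R ^ 2 / d) * (d * (A' * B')) := by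
        field_simp
      rw [h4]
      have h5 : d * (A' * B') ≤ A' * ‖z - (Y m : ℂ)‖ * B' := by
        calc d * (A' * B') ≤ ‖z - (Y m : ℂ)‖ * (A' * B') :=
              mul_le_mul_of_nonneg_right hYm (mul_nonneg hA'nn hB'nn)
          _ = A' * ‖z - (Y m : ℂ)‖ * B' := by ring
      calc (R ^ 2 / d) * (d * (A' * B')) ≤ (R ^ 2 / d) * (A' * ‖z - (Y m : ℂ)‖ * B') :=
            mul_le_mul_of_nonneg_left h5 hRd
        _ ≤ (R + R ^ 2 / d) * (A' * ‖z - (Y m : ℂ)‖ * B') := by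
            apply mul_le_mul_of_nonneg_right (by linarith)
            exact mul_nonneg (mul_nonneg hA'nn (norm_nonneg _)) hB'nn
    calc ‖z - (X 0 : ℂ)‖ * (A * B) * ‖z - (X n : ℂ)‖
        ≤ R * (A' * B') * R := step1
      _ ≤ (R + R ^ 2 / d) * (A' * ‖z - (Y m : ℂ)‖ * B') := step2
      _ = (R + R ^ 2 / d) * (A' * ‖z - (Y m : ℂ)‖ * B') := rfl

/-- Let `(p n)` be monic real polynomials, `p n = ∏ (X - x n k)`, whose simple zeros all lie
in the compact interval `Δ = [a,b]` and interlace for consecutive degrees. Then on any compact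
set `K ⊆ ℂ \ Δ`, the ratios `|p_{n+1}(z)| / |p_n(z)|` are uniformly bounded in `n` and `z ∈ K`. -/
theorem ratio_consecutive_uniformly_bounded (a b : ℝ) (hab : a ≤ b)
    (p : ℕ → Polynomial ℝ) (x : (n : ℕ) → Fin n → ℝ)
    (hx : ∀ n, StrictMono (x n))
    (hxΔ : ∀ n, ∀ k : Fin n, x n k ∈ Set.Icc a b)
    (hp : ∀ n, p n = ∏ k : Fin n, (X - C (x n k)))
    (hinter : ∀ n, ∀ k : Fin n, x (n + 1) k.castSucc < x n k ∧ x n k < x (n + 1) k.succ)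
    (K : Set ℂ) (hK : IsCompact K)
    (hKΔ : Disjoint K ((fun t : ℝ => (t : ℂ)) '' Set.Icc a b)) :
    ∃ M : ℝ, ∀ n : ℕ, ∀ z ∈ K,
      ‖(Polynomial.aeval z) (p (n + 1))‖ / ‖(Polynomial.aeval z) (p n)‖ ≤ M := by
  classical
  rcases K.eq_empty_or_nonempty with hKe | ⟨z₀, hz₀⟩
  · exact ⟨0, fun n z hz => absurd hz (by simp [hKe])⟩
  set Δ' : Set ℂ := (fun t : ℝ => (t : ℂ)) '' Set.Icc a b with hΔ'
  have hΔne : Δ'.Nonempty := ⟨a, ⟨a, ⟨le_refl a, hab⟩, rfl⟩⟩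
  have hΔc : IsCompact Δ' := isCompact_Icc.image Complex.continuous_ofReal
  have hcont : ContinuousOn (fun w => Metric.infDist w Δ') K :=
    (Metric.continuous_infDist_pt Δ').continuousOn
  obtain ⟨w₀, hw₀K, hw₀⟩ := hK.exists_isMinOn ⟨z₀, hz₀⟩ hcont
  set d := Metric.infDist w₀ Δ' with hdd
  have hd : 0 < d := by
    have hw₀n : w₀ ∉ Δ' := Set.disjoint_left.mp hKΔ hw₀K
    exact (hΔc.isClosed.notMem_iff_infDist_pos hΔne).mp hw₀n
  have hdK : ∀ z ∈ K, ∀ t ∈ Set.Icc a b, d ≤ ‖z - (t : ℂ)‖ := by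
    intro z hz t ht
    have h1 : Metric.infDist z Δ' ≤ dist z (t : ℂ) :=
      Metric.infDist_le_dist_of_mem ⟨t, ht, rfl⟩
    have h2 : d ≤ Metric.infDist z Δ' := isMinOn_iff.mp hw₀ z hz
    rw [dist_eq_norm] at h1
    linarith
  obtain ⟨C, hC⟩ := hK.isBounded.exists_norm_le
  set R := C + (|a| + |b|) with hRR
  have hRK : ∀ z ∈ K, ∀ t ∈ Set.Icc a b, ‖z - (t : ℂ)‖ ≤ R := by
    intro z hz t ht
    have h1 : ‖z - (t : ℂ)‖ ≤ ‖z‖ + ‖(t : ℂ)‖ := norm_sub_le _ _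
    have h2 : ‖(t : ℂ)‖ = |t| := by simp
    have h3 : |t| ≤ |a| + |b| := by
      rw [abs_le]
      constructor
      · linarith [neg_abs_le a, ht.1, abs_nonneg b]
      · linarith [le_abs_self b, ht.2, abs_nonneg a]
    have h4 : ‖z‖ ≤ C := hC z hz
    rw [h2] at h1
    linarith
  have hR0 : 0 ≤ R := le_trans (norm_nonneg _) (hRK z₀ hz₀ a ⟨le_refl a, hab⟩)
  refine ⟨R + R ^ 2 / d, ?_⟩
  intro n z hz
  have heval : ∀ m, ‖(aeval z) (p m)‖ = ∏ k : Fin m, ‖z - (x m k : ℂ)‖ := by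
    intro m
    rw [hp m, map_prod, norm_prod]
    apply Finset.prod_congr rfl
    intro k _
    simp [Complex.coe_algebraMap]
  have hdenpos : 0 < ∏ k : Fin n, ‖z - (x n k : ℂ)‖ :=
    Finset.prod_pos fun k _ => lt_of_lt_of_le hd (hdK z hz _ (hxΔ n k))
  rw [heval, heval, div_le_iff₀ hdenpos]
  rcases Nat.eq_zero_or_pos n with rfl | hn
  · have h1 : ∏ k : Fin (0 + 1), ‖z - (x (0 + 1) k : ℂ)‖ = ‖z - (x 1 0 : ℂ)‖ := by
      simp
    have h2 : ∏ k : Fin 0, ‖z - (x 0 k : ℂ)‖ = 1 := by simp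
    rw [h1, h2, mul_one]
    have := hRK z hz _ (hxΔ 1 0)
    have hRd : 0 ≤ R ^ 2 / d := div_nonneg (sq_nonneg R) hd.le
    linarith
  · set Xf : ℕ → ℝ := fun i => x (n + 1) ⟨min i n, by omega⟩ with hXf
    set Yf : ℕ → ℝ := fun i => x n ⟨min i (n - 1), by omega⟩ with hYf
    have hXeq : ∏ k : Fin (n + 1), ‖z - (x (n + 1) k : ℂ)‖
        = ∏ i ∈ Finset.range (n + 1), ‖z - (Xf i : ℂ)‖ := by
      rw [← Fin.prod_univ_eq_prod_range (fun i => ‖z - (Xf i : ℂ)‖) (n + 1)]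
      apply Finset.prod_congr rfl
      intro k _
      have hk : Xf (k : ℕ) = x (n + 1) k := by
        simp only [hXf]
        congr 1
        apply Fin.ext
        show min (k : ℕ) n = (k : ℕ)
        have := k.isLt; omega
      rw [hk]
    have hYeq : ∏ k : Fin n, ‖z - (x n k : ℂ)‖
        = ∏ i ∈ Finset.range n, ‖z - (Yf i : ℂ)‖ := by
      rw [← Fin.prod_univ_eq_prod_range (fun i => ‖z - (Yf i : ℂ)‖) n]
      apply Finset.prod_congr rfl
      intro k _
      have hk : Yf (k : ℕ) = x n k := by
        simp only [hYf]
        congr 1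
        apply Fin.ext
        show min (k : ℕ) (n - 1) = (k : ℕ)
        have := k.isLt; omega
      rw [hk]
    rw [hXeq, hYeq]
    apply ratio_aux_key z d R hd hR0 n hn Xf Yf
    · intro i j hij hj
      apply (hx (n + 1)).monotone
      rw [Fin.mk_le_mk]
      omega
    · intro i hi
      have h := (hinter n ⟨i, hi⟩).1
      have e1 : Xf i = x (n + 1) (Fin.castSucc ⟨i, hi⟩) := by
        simp only [hXf]
        congr 1
        apply Fin.ext
        show min i n = i
        omega
      have e2 : Yf i = x n ⟨i, hi⟩ := by
        simp only [hYf]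
        congr 1
        apply Fin.ext
        show min i (n - 1) = i
        omega
      rw [e1, e2]
      exact h
    · intro i hi
      have h := (hinter n ⟨i, hi⟩).2
      have e1 : Xf (i + 1) = x (n + 1) (Fin.succ ⟨i, hi⟩) := by
        simp only [hXf]
        congr 1
        apply Fin.ext
        show min (i + 1) n = i + 1
        omega
      have e2 : Yf i = x n ⟨i, hi⟩ := by
        simp only [hYf]
        congr 1
        apply Fin.ext
        show min i (n - 1) = i
        omega
      rw [e1, e2]
      exact h
    · intro i hi
      exact hdK z hz _ (hxΔ n _)
    · intro i hi
      exact hRK z hz _ (hxΔ (n + 1) _)
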